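/- arXiv:1408.2280 — 5 statements merged into one kernel-verified Lean document; each statement's English description precedes it below -/
import Mathlib

section
/- Let m, n ≥ 0, let λ ∈ Λ_{n+1} with λ ⊂ m^{n+1}, let μ ∈ Λ_n with μ ⊂ m^n, and let r be an integer with 0 ≤ r ≤ m. Set d = #{1 ≤ j ≤ m : λ′_j = μ′_j + 1}, where λ′, μ′ ∈ Λ_m are the conjugate partitions. Then (n^m − μ′) ∼_r ((n+1)^m − λ′) holds in Λ_m if and only if μ ⪯ λ (with μ regarded as an element of Λ_{n+1}) and m − d ≤ r. -/
open Finset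

/-- `l` is a partition with at most `N` parts: `l 1 ≥ l 2 ≥ ⋯ ≥ l N (≥ 0)`. -/
def IsPartition {N : ℕ} (l : Fin N → ℕ) : Prop :=
  ∀ i j : Fin N, i ≤ j → l j ≤ l i

/-- Containment of diagrams: `μ ⊂ l`. -/
def SubDiag {N : ℕ} (μ l : Fin N → ℕ) : Prop := ∀ j, μ j ≤ l j

/-- The weight `|l| = l 1 + ⋯ + l N`. -/
def wt {N : ℕ} (l : Fin N → ℕ) : ℕ := ∑ j, l j

/-- The skew diagram `l/μ` is a vertical strip: `μ j ≤ l j ≤ μ j + 1` for all `j`. -/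
def VStrip {N : ℕ} (l μ : Fin N → ℕ) : Prop :=
  ∀ j, μ j ≤ l j ∧ l j ≤ μ j + 1

/-- The skew diagram `l/μ` is a horizontal strip:
`l 1 ≥ μ 1 ≥ l 2 ≥ μ 2 ≥ ⋯ ≥ l N ≥ μ N` (interlacing). -/
def HStrip {N : ℕ} (l μ : Fin N → ℕ) : Prop :=
  (∀ j, μ j ≤ l j) ∧ ∀ (j : ℕ) (h : j + 1 < N), l ⟨j + 1, h⟩ ≤ μ ⟨j, by omega⟩

/-- `|l/μ| = |l| - |μ|` (for `μ ⊂ l`). -/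
def skewWt {N : ℕ} (l μ : Fin N → ℕ) : ℕ := ∑ j, (l j - μ j)

/-- The proximity relation `μ ∼_r l`: there is a partition `ν ⊂ l, ν ⊂ μ` such that
`l/ν` and `μ/ν` are vertical strips with `|l/ν| + |μ/ν| ≤ r`. -/
def simRel {N : ℕ} (r : ℕ) (μ l : Fin N → ℕ) : Prop :=
  ∃ ν : Fin N → ℕ, IsPartition ν ∧ SubDiag ν l ∧ SubDiag ν μ ∧
    VStrip l ν ∧ VStrip μ ν ∧ skewWt l ν + skewWt μ ν ≤ r

/-- `μ ⪯ l`: there is a partition `ν` with `μ ⊂ ν ⊂ l` such that `l/ν` and `ν/μ`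
are horizontal strips. -/
def preceq {N : ℕ} (μ l : Fin N → ℕ) : Prop :=
  ∃ ν : Fin N → ℕ, IsPartition ν ∧ SubDiag μ ν ∧ SubDiag ν l ∧
    HStrip l ν ∧ HStrip ν μ

/-- The conjugate partition `l′ ∈ Λ_m` (for `l ∈ Λ_N` with `l 1 ≤ m`):
`l′ i = #{j : l j ≥ i}` (here `i : Fin m` is 0-based, so `i+1`-th row). -/
def conjP {N : ℕ} (m : ℕ) (l : Fin N → ℕ) : Fin m → ℕ :=
  fun i => (Finset.univ.filter (fun j : Fin N => (i : ℕ) + 1 ≤ l j)).card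

/-- The rectangular partition `m^N ∈ Λ_N`. -/
def rectP (m N : ℕ) : Fin N → ℕ := fun _ => m

/-- The complement `m^N − l` of `l ⊂ m^N` in `Λ_N`: `(m^N − l) j = m − l (N+1−j)`
(1-based), i.e. `m - l j.rev` (0-based). -/
def complP {N : ℕ} (m : ℕ) (l : Fin N → ℕ) : Fin N → ℕ :=
  fun j => m - l j.rev

/-- The natural embedding `Λ_N ↪ Λ_{N+1}` by appending a zero part. -/
def extendP {N : ℕ} (l : Fin N → ℕ) : Fin (N + 1) → ℕ := Fin.snoc l 0

/- ### Auxiliary lemmas -/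


lemma mem_lower_iff {N : ℕ} (S : Finset (Fin N))
    (hS : ∀ j k : Fin N, j ≤ k → k ∈ S → j ∈ S) (k : Fin N) :
    k ∈ S ↔ (k : ℕ) < S.card := by
  constructor
  · intro hk
    have h1 : Finset.Iic k ⊆ S := fun j hj => hS j k (Finset.mem_Iic.1 hj) hk
    have h2 := Finset.card_le_card h1
    rw [Fin.card_Iic] at h2
    omega
  · intro hk
    by_contra hkS
    have h2 : S ⊆ Finset.Iio k := by
      intro j hj
      rw [Finset.mem_Iio]
      by_contra hjk
      exact hkS (hS k j (le_of_not_gt hjk) hj)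
    have h3 := Finset.card_le_card h2
    rw [Fin.card_Iio] at h3
    omega

lemma conj_char {N m : ℕ} (l : Fin N → ℕ) (hl : IsPartition l) (i : Fin m) (k : Fin N) :
    ((i : ℕ) + 1 ≤ l k) ↔ (k : ℕ) < conjP m l i := by
  have := mem_lower_iff (Finset.univ.filter (fun j : Fin N => (i : ℕ) + 1 ≤ l j))
    (by
      intro j k' hjk hk'
      simp only [Finset.mem_filter, Finset.mem_univ, true_and] at *
      exact le_trans hk' (hl j k' hjk)) k
  simpa [conjP] using this

lemma conj_le {N m : ℕ} (l : Fin N → ℕ) (i : Fin m) : conjP m l i ≤ N := by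
  unfold conjP
  exact le_trans (Finset.card_filter_le _ _) (by simp)

lemma conj_isPartition {N m : ℕ} (l : Fin N → ℕ) : IsPartition (conjP m l) := by
  intro i j hij
  apply Finset.card_le_card
  intro k hk
  simp only [Finset.mem_filter, Finset.mem_univ, true_and] at *
  have : (i : ℕ) ≤ j := hij
  omega

lemma row_le_iff {N m : ℕ} (p q : Fin N → ℕ) (hp : IsPartition p) (hq : IsPartition q)
    (hpb : ∀ k, p k ≤ m) :
    (∀ k, p k ≤ q k) ↔ ∀ i : Fin m, conjP m p i ≤ conjP m q i := by
  constructor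
  · intro h i
    apply Finset.card_le_card
    intro k hk
    simp only [Finset.mem_filter, Finset.mem_univ, true_and] at *
    exact le_trans hk (h k)
  · intro h k
    rcases Nat.eq_zero_or_pos (p k) with h0 | h0
    · omega
    · have him : p k - 1 < m := by have := hpb k; omega
      have h1 : ((⟨p k - 1, him⟩ : Fin m) : ℕ) + 1 ≤ p k := by simp; omega
      have h2 := (conj_char p hp ⟨p k - 1, him⟩ k).1 h1
      have h3 : (k : ℕ) < conjP m q ⟨p k - 1, him⟩ := lt_of_lt_of_le h2 (h _)
      have h4 := (conj_char q hq ⟨p k - 1, him⟩ k).2 h3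
      simp at h4
      omega

lemma shift_iff {N m : ℕ} (p q : Fin N → ℕ) (hp : IsPartition p) (hq : IsPartition q)
    (hpb : ∀ k, p k ≤ m) :
    (∀ (k : ℕ) (h : k + 2 < N), p ⟨k + 2, h⟩ ≤ q ⟨k, by omega⟩) ↔
      ∀ i : Fin m, conjP m p i ≤ conjP m q i + 2 := by
  constructor
  · intro h i
    by_contra hc
    push_neg at hc
    have hN : conjP m p i ≤ N := conj_le p i
    have hk2 : conjP m q i + 2 < N := by omega
    have hp2 : (i : ℕ) + 1 ≤ p ⟨conjP m q i + 2, hk2⟩ :=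
      (conj_char p hp i ⟨conjP m q i + 2, hk2⟩).2 (by simpa using hc)
    have hqk : p ⟨conjP m q i + 2, hk2⟩ ≤ q ⟨conjP m q i, by omega⟩ := h _ hk2
    have hq2 : ¬ ((i : ℕ) + 1 ≤ q ⟨conjP m q i, by omega⟩) := by
      intro hcon
      have := (conj_char q hq i ⟨conjP m q i, by omega⟩).1 hcon
      simp at this
    omega
  · intro h k hk
    rcases Nat.eq_zero_or_pos (p ⟨k + 2, hk⟩) with h0 | h0
    · omega
    · have him : p ⟨k + 2, hk⟩ - 1 < m := by have := hpb ⟨k + 2, hk⟩; omega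
      have h1 : ((⟨p ⟨k + 2, hk⟩ - 1, him⟩ : Fin m) : ℕ) + 1 ≤ p ⟨k + 2, hk⟩ := by simp; omega
      have h2 := (conj_char p hp ⟨p ⟨k + 2, hk⟩ - 1, him⟩ ⟨k + 2, hk⟩).1 h1
      simp at h2
      have h3 : (k : ℕ) < conjP m q ⟨p ⟨k + 2, hk⟩ - 1, him⟩ := by
        have := h ⟨p ⟨k + 2, hk⟩ - 1, him⟩; omega
      have h4 := (conj_char q hq ⟨p ⟨k + 2, hk⟩ - 1, him⟩ ⟨k, by omega⟩).2 h3
      simp at h4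
      omega

lemma isPartition_extend {N : ℕ} (mu : Fin N → ℕ) (hmu : IsPartition mu) :
    IsPartition (extendP mu) := by
  intro i j hij
  induction j using Fin.lastCases with
  | last => simp [extendP]
  | cast j =>
    have hi : i ≠ Fin.last N := by
      intro h
      rw [h] at hij
      exact absurd (le_antisymm hij (Fin.le_last _)) (by
        intro hcontra
        exact absurd (hcontra ▸ Fin.castSucc_lt_last j) (lt_irrefl _))
    obtain ⟨i', rfl⟩ := Fin.exists_castSucc_eq.2 hi
    simp only [extendP, Fin.snoc_castSucc]
    exact hmu i' j (by exact_mod_cast hij)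

lemma extend_le {N m : ℕ} (mu : Fin N → ℕ) (h : ∀ k, mu k ≤ m) : ∀ k, extendP mu k ≤ m := by
  intro k
  induction k using Fin.lastCases with
  | last => simp [extendP]
  | cast k => simp [extendP, h]

lemma conj_extend {N m : ℕ} (mu : Fin N → ℕ) (i : Fin m) :
    conjP m (extendP mu) i = conjP m mu i := by
  unfold conjP
  symm
  apply Finset.card_bij (fun (k : Fin N) _ => Fin.castSucc k)
  · intro k hk
    simp only [Finset.mem_filter, Finset.mem_univ, true_and] at *
    simpa [extendP] using hk
  · intro k1 _ k2 _ h
    exact Fin.castSucc_injective _ h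
  · intro j hj
    simp only [Finset.mem_filter, Finset.mem_univ, true_and] at hj
    have hjl : j ≠ Fin.last N := by
      intro h
      rw [h] at hj
      simp [extendP] at hj
    obtain ⟨k, rfl⟩ := Fin.exists_castSucc_eq.2 hjl
    exact ⟨k, by simpa [extendP] using hj, rfl⟩

lemma card_filter_rev {m : ℕ} (p : Fin m → Prop) [DecidablePred p] :
    (univ.filter fun j : Fin m => p j.rev).card = (univ.filter p).card := by
  apply Finset.card_bij (fun j _ => j.rev)
  · intro a ha
    simp only [Finset.mem_filter, Finset.mem_univ, true_and] at *
    exact ha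
  · intro a _ b _ h
    exact Fin.rev_injective h
  · intro b hb
    simp only [Finset.mem_filter, Finset.mem_univ, true_and] at hb
    exact ⟨b.rev, by simp [Fin.rev_rev, hb], Fin.rev_rev b⟩

lemma isPartition_of_adj {N : ℕ} (l : Fin N → ℕ)
    (h : ∀ (k : ℕ) (hk : k + 1 < N), l ⟨k + 1, hk⟩ ≤ l ⟨k, by omega⟩) : IsPartition l := by
  have H : ∀ d (i : ℕ) (hd : i + d < N), l ⟨i + d, hd⟩ ≤ l ⟨i, by omega⟩ := by
    intro d
    induction d with
    | zero => intro i hd; exact le_refl _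
    | succ d ih =>
      intro i hd
      have h1 := h (i + d) (by omega)
      have h2 := ih i (by omega)
      exact le_trans (by exact_mod_cast h1) h2
  intro i j hij
  have hij' : (i : ℕ) ≤ (j : ℕ) := hij
  have hj : (i : ℕ) + ((j : ℕ) - (i : ℕ)) < N := by omega
  have he : (⟨(i : ℕ) + ((j : ℕ) - (i : ℕ)), hj⟩ : Fin N) = j := Fin.ext (by simp; omega)
  have := H ((j : ℕ) - (i : ℕ)) (i : ℕ) hj
  rw [he] at this
  simpa using this

lemma preceq_iff {N : ℕ} (lam mu : Fin N → ℕ) (hlam : IsPartition lam) (hmu : IsPartition mu) :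
    preceq mu lam ↔ (∀ k, mu k ≤ lam k) ∧
      (∀ (k : ℕ) (h : k + 2 < N), lam ⟨k + 2, h⟩ ≤ mu ⟨k, by omega⟩) := by
  constructor
  · rintro ⟨ν, hv, hmv, hvl, ⟨_, hvl2⟩, ⟨_, hvm2⟩⟩
    refine ⟨fun k => le_trans (hmv k) (hvl k), fun k h => ?_⟩
    have h1 : lam ⟨k + 2, h⟩ ≤ ν ⟨k + 1, by omega⟩ := hvl2 (k + 1) h
    have h2 : ν ⟨k + 1, by omega⟩ ≤ mu ⟨k, by omega⟩ := hvm2 k (by omega)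
    exact le_trans h1 h2
  · rintro ⟨h1, h2⟩
    refine ⟨fun k => if hk : (k : ℕ) = 0 then lam k else
      min (lam k) (mu ⟨(k : ℕ) - 1, by omega⟩), ?_, ?_, ?_, ⟨?_, ?_⟩, ⟨?_, ?_⟩⟩
    · apply isPartition_of_adj
      intro k hk
      by_cases h0 : k = 0
      · subst h0
        simp only [Fin.val_mk, dif_neg (by omega : ¬ (1 : ℕ) = 0), dif_pos rfl]
        exact le_trans (min_le_left _ _) (hlam ⟨0, by omega⟩ ⟨1, hk⟩ (by simp))
      · simp only [Fin.val_mk, dif_neg (by omega : ¬ k + 1 = 0), dif_neg h0]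
        apply le_min
        · exact le_trans (min_le_left _ _) (hlam ⟨k, by omega⟩ ⟨k + 1, hk⟩ (by simp))
        · refine le_trans (min_le_right _ _) (hmu ⟨k - 1, by omega⟩ ⟨k + 1 - 1, by omega⟩ ?_)
          simp [Fin.le_def]
    · intro k
      by_cases h0 : (k : ℕ) = 0
      · simp only [dif_pos h0]; exact h1 k
      · simp only [dif_neg h0]
        exact le_min (h1 k) (hmu ⟨(k : ℕ) - 1, by omega⟩ k (by simp [Fin.le_def]))
    · intro k
      by_cases h0 : (k : ℕ) = 0
      · simp only [dif_pos h0]; exact le_refl _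
      · simp only [dif_neg h0]; exact min_le_left _ _
    · intro k
      by_cases h0 : (k : ℕ) = 0
      · simp only [dif_pos h0]; exact le_refl _
      · simp only [dif_neg h0]; exact min_le_left _ _
    · intro j hj
      by_cases h0 : j = 0
      · subst h0
        simp only [Fin.val_mk, dif_pos rfl]
        exact hlam ⟨0, by omega⟩ ⟨1, hj⟩ (by simp)
      · simp only [Fin.val_mk, dif_neg h0]
        apply le_min
        · exact hlam ⟨j, by omega⟩ ⟨j + 1, hj⟩ (by simp)
        · have he : (⟨j - 1 + 2, by omega⟩ : Fin N) = ⟨j + 1, hj⟩ := Fin.ext (by simp; omega)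
          have := h2 (j - 1) (by omega)
          rw [he] at this
          exact this
    · intro k
      by_cases h0 : (k : ℕ) = 0
      · simp only [dif_pos h0]; exact h1 k
      · simp only [dif_neg h0]
        exact le_min (h1 k) (hmu ⟨(k : ℕ) - 1, by omega⟩ k (by simp [Fin.le_def]))
    · intro j hj
      simp only [Fin.val_mk, dif_neg (by omega : ¬ j + 1 = 0)]
      exact le_trans (min_le_right _ _) (le_of_eq (by congr 1))

/-- For `λ ∈ Λ_{n+1}` with `λ ⊂ m^{n+1}`, `μ ∈ Λ_n` with `μ ⊂ m^n`, and
`0 ≤ r ≤ m`, with `d = #{1 ≤ j ≤ m : λ′_j = μ′_j + 1}`, one has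
`(n^m − μ′) ∼_r ((n+1)^m − λ′)` in `Λ_m` iff `μ ⪯ λ` (in `Λ_{n+1}`) and `m − d ≤ r`. -/
theorem statement0 (m n : ℕ) (lam : Fin (n + 1) → ℕ) (hlam : IsPartition lam)
    (hlamb : SubDiag lam (rectP m (n + 1)))
    (mu : Fin n → ℕ) (hmu : IsPartition mu) (hmub : SubDiag mu (rectP m n))
    (r : ℕ) (hr : r ≤ m) :
    simRel r (complP n (conjP m mu)) (complP (n + 1) (conjP m lam)) ↔
      (preceq (extendP mu) lam ∧
        m - (Finset.univ.filter
          (fun j : Fin m => conjP m lam j = conjP m mu j + 1)).card ≤ r) := by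
  classical
  have han : ∀ i : Fin m, conjP m lam i ≤ n + 1 := fun i => conj_le lam i
  have hbn : ∀ i : Fin m, conjP m mu i ≤ n := fun i => conj_le mu i
  have hpa : IsPartition (conjP m lam) := conj_isPartition lam
  have hpb : IsPartition (conjP m mu) := conj_isPartition mu
  have hmt : IsPartition (extendP mu) := isPartition_extend mu hmu
  have hmub' : ∀ k, mu k ≤ m := hmub
  have hlamb' : ∀ k, lam k ≤ m := hlamb
  have hmtb : ∀ k, extendP mu k ≤ m := extend_le mu hmub'
  have hCond : preceq (extendP mu) lam ↔
      ∀ i : Fin m, conjP m mu i ≤ conjP m lam i ∧ conjP m lam i ≤ conjP m mu i + 2 := by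
    rw [preceq_iff lam (extendP mu) hlam hmt]
    rw [row_le_iff (m := m) (extendP mu) lam hmt hlam hmtb]
    rw [shift_iff (m := m) lam (extendP mu) hlam hmt hlamb']
    simp only [conj_extend]
    exact ⟨fun ⟨u, v⟩ i => ⟨u i, v i⟩, fun h => ⟨fun i => (h i).1, fun i => (h i).2⟩⟩
  have hcardT : (univ.filter fun j : Fin m =>
      ¬ (conjP m lam j.rev = conjP m mu j.rev + 1)).card =
      m - (univ.filter fun i : Fin m => conjP m lam i = conjP m mu i + 1).card := by
    have e1 := card_filter_rev (fun i : Fin m => conjP m lam i = conjP m mu i + 1)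
    have e2 := Finset.card_filter_add_card_filter_not
      (s := (univ : Finset (Fin m)))
      (p := fun j : Fin m => conjP m lam j.rev = conjP m mu j.rev + 1)
    rw [Finset.card_univ, Fintype.card_fin] at e2
    omega
  constructor
  · rintro ⟨ν, hνp, hνL, hνX, hVL, hVX, hwt⟩
    have hfacts : ∀ i : Fin m,
        conjP m mu i ≤ conjP m lam i ∧ conjP m lam i ≤ conjP m mu i + 2 := by
      intro i
      have h1 := hVL i.rev
      have h2 := hVX i.rev
      simp only [complP, Fin.rev_rev] at h1 h2
      have := han i; have := hbn i
      omega
    refine ⟨hCond.2 hfacts, ?_⟩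
    have hsum : (univ.filter fun j : Fin m =>
        ¬ (conjP m lam j.rev = conjP m mu j.rev + 1)).card ≤
        skewWt (complP (n + 1) (conjP m lam)) ν + skewWt (complP n (conjP m mu)) ν := by
      rw [skewWt, skewWt, ← Finset.sum_add_distrib]
      calc (univ.filter fun j : Fin m =>
            ¬ (conjP m lam j.rev = conjP m mu j.rev + 1)).card
          = ∑ _j ∈ (univ.filter fun j : Fin m =>
            ¬ (conjP m lam j.rev = conjP m mu j.rev + 1)), 1 := by
            rw [Finset.card_eq_sum_ones]
        _ ≤ ∑ j ∈ (univ.filter fun j : Fin m =>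
            ¬ (conjP m lam j.rev = conjP m mu j.rev + 1)),
            ((complP (n + 1) (conjP m lam) j - ν j) + (complP n (conjP m mu) j - ν j)) := by
            apply Finset.sum_le_sum
            intro j hj
            simp only [Finset.mem_filter, Finset.mem_univ, true_and] at hj
            have h1 := hVL j
            have h2 := hVX j
            simp only [complP] at h1 h2 ⊢
            have := han j.rev; have := hbn j.rev
            omega
        _ ≤ ∑ j, ((complP (n + 1) (conjP m lam) j - ν j) +
            (complP n (conjP m mu) j - ν j)) := by
            apply Finset.sum_le_sum_of_subset (Finset.subset_univ _)
    omega
  · rintro ⟨hpre, hd⟩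
    have hC := hCond.1 hpre
    refine ⟨fun j => min ((n + 1) - conjP m lam j.rev) (n - conjP m mu j.rev),
      ?_, ?_, ?_, ?_, ?_, ?_⟩
    · intro i j hij
      have hrev : j.rev ≤ i.rev := Fin.rev_le_rev.2 hij
      have h1 := hpa j.rev i.rev hrev
      have h2 := hpb j.rev i.rev hrev
      exact min_le_min (by omega) (by omega)
    · intro j
      exact min_le_left _ _
    · intro j
      exact min_le_right _ _
    · intro j
      have hC' := hC j.rev
      have := han j.rev; have := hbn j.rev
      constructor
      · exact min_le_left _ _
      · simp only [complP]
        omega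
    · intro j
      have hC' := hC j.rev
      have := han j.rev; have := hbn j.rev
      constructor
      · exact min_le_right _ _
      · simp only [complP]
        omega
    · have hstep : skewWt (complP (n + 1) (conjP m lam))
          (fun j => min ((n + 1) - conjP m lam j.rev) (n - conjP m mu j.rev)) +
          skewWt (complP n (conjP m mu))
          (fun j => min ((n + 1) - conjP m lam j.rev) (n - conjP m mu j.rev)) ≤
          ∑ j : Fin m, (if conjP m lam j.rev = conjP m mu j.rev + 1 then 0 else 1) := by
        rw [skewWt, skewWt, ← Finset.sum_add_distrib]
        apply Finset.sum_le_sum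
        intro j _
        have hC' := hC j.rev
        have := han j.rev; have := hbn j.rev
        simp only [complP]
        by_cases h : conjP m lam j.rev = conjP m mu j.rev + 1
        · simp only [if_pos h]
          omega
        · simp only [if_neg h]
          omega
      have hsumite : ∑ j : Fin m, (if conjP m lam j.rev = conjP m mu j.rev + 1 then 0 else 1) =
          (univ.filter fun j : Fin m =>
            ¬ (conjP m lam j.rev = conjP m mu j.rev + 1)).card := by
        rw [Finset.card_filter]
        apply Finset.sum_congr rfl
        intro j _
        by_cases h : conjP m lam j.rev = conjP m mu j.rev + 1 <;> simp [h]
      omega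
end

section
/- Let m, n ≥ 0, let λ ∈ Λ_{n+1} with λ ⊂ m^{n+1}, let μ ∈ Λ_n with μ ⊂ m^n, and let r be an integer with 0 ≤ r ≤ m. Set d = #{1 ≤ j ≤ m : λ′_j = μ′_j + 1}. Then (n^m − μ′) ∼_r ((n+1)^m − λ′) holds in Λ_m if and only if both (n^m − μ′) ∼_m ((n+1)^m − λ′) holds and r ≥ m − d. -/
open Finset

lemma conjP_le {N : ℕ} (m : ℕ) (l : Fin N → ℕ) (i : Fin m) : conjP m l i ≤ N := by
  classical
  simpa [conjP] using (Finset.card_filter_le Finset.univ (fun j : Fin N => (i : ℕ) + 1 ≤ l j))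

lemma conjP_anti {N : ℕ} (m : ℕ) (l : Fin N → ℕ) {i i' : Fin m} (h : i ≤ i') :
    conjP m l i' ≤ conjP m l i := by
  classical
  apply Finset.card_le_card
  intro j hj
  have h' : (i : ℕ) ≤ (i' : ℕ) := h
  simp only [Finset.mem_filter] at hj ⊢
  exact ⟨hj.1, by omega⟩

lemma complP_conjP_isPartition {N : ℕ} (m : ℕ) (l : Fin N → ℕ) :
    IsPartition (complP N (conjP m l)) := by
  intro i j hij
  have hrev : j.rev ≤ i.rev := Fin.rev_le_rev.mpr hij
  have := conjP_anti m l hrev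
  unfold complP
  omega

lemma simRel_iff {m : ℕ} {A B : Fin m → ℕ} (hA : IsPartition A) (hB : IsPartition B)
    (r : ℕ) :
    simRel r A B ↔ ((∀ j, A j ≤ B j + 1 ∧ B j ≤ A j + 1) ∧
      (Finset.univ.filter (fun j => A j ≠ B j)).card ≤ r) := by
  classical
  constructor
  · rintro ⟨ν, hν, hνB, hνA, hVB, hVA, hwt⟩
    constructor
    · intro j
      have h1 := hVB j; have h2 := hVA j
      omega
    · refine le_trans ?_ hwt
      rw [Finset.card_filter]
      unfold skewWt
      rw [← Finset.sum_add_distrib]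
      apply Finset.sum_le_sum
      intro j _
      have h1 := hVB j; have h2 := hVA j
      by_cases h : A j = B j <;> simp [h] <;> omega
  · rintro ⟨hcond, hcard⟩
    refine ⟨fun j => min (A j) (B j), ?_, ?_, ?_, ?_, ?_, ?_⟩
    · intro i j hij
      exact le_min (le_trans (min_le_left _ _) (hA i j hij))
        (le_trans (min_le_right _ _) (hB i j hij))
    · intro j; exact min_le_right _ _
    · intro j; exact min_le_left _ _
    · intro j; have := hcond j
      rcases le_total (A j) (B j) with h | h <;> simp [min_eq_left, min_eq_right, h] <;> omega
    · intro j; have := hcond j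
      rcases le_total (A j) (B j) with h | h <;> simp [min_eq_left, min_eq_right, h] <;> omega
    · refine le_trans ?_ hcard
      rw [Finset.card_filter]
      unfold skewWt
      rw [← Finset.sum_add_distrib]
      apply Finset.sum_le_sum
      intro j _
      have := hcond j
      by_cases h : A j = B j <;>
        rcases le_total (A j) (B j) with h' | h' <;>
        simp [h, min_eq_left, min_eq_right, h'] <;> omega

/-- For `λ ∈ Λ_{n+1}` with `λ ⊂ m^{n+1}`, `μ ∈ Λ_n` with `μ ⊂ m^n`, and
`0 ≤ r ≤ m`, with `d = #{1 ≤ j ≤ m : λ′_j = μ′_j + 1}`, one has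
`(n^m − μ′) ∼_r ((n+1)^m − λ′)` iff `(n^m − μ′) ∼_m ((n+1)^m − λ′)` and `r ≥ m − d`. -/
theorem statement2 (m n : ℕ) (lam : Fin (n + 1) → ℕ) (hlam : IsPartition lam)
    (hlamb : SubDiag lam (rectP m (n + 1)))
    (mu : Fin n → ℕ) (hmu : IsPartition mu) (hmub : SubDiag mu (rectP m n))
    (r : ℕ) (hr : r ≤ m) :
    simRel r (complP n (conjP m mu)) (complP (n + 1) (conjP m lam)) ↔
      (simRel m (complP n (conjP m mu)) (complP (n + 1) (conjP m lam)) ∧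
        m - (Finset.univ.filter
          (fun j : Fin m => conjP m lam j = conjP m mu j + 1)).card ≤ r) := by
  classical
  set A := complP n (conjP m mu) with hAdef
  set B := complP (n + 1) (conjP m lam) with hBdef
  have hA : IsPartition A := complP_conjP_isPartition m mu
  have hB : IsPartition B := complP_conjP_isPartition m lam
  have hAB : ∀ j : Fin m, (A j = B j ↔ conjP m lam j.rev = conjP m mu j.rev + 1) := by
    intro j
    have h1 := conjP_le m mu j.rev
    have h2 := conjP_le m lam j.rev
    simp only [hAdef, hBdef, complP]
    omega
  have hcardeq : (Finset.univ.filter fun j : Fin m => A j = B j).card =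
      (Finset.univ.filter fun j : Fin m => conjP m lam j = conjP m mu j + 1).card := by
    apply Finset.card_equiv Fin.revPerm
    intro i
    simp only [Finset.mem_filter, Finset.mem_univ, true_and, Fin.revPerm_apply]
    exact hAB i
  have hsplit : (Finset.univ.filter fun j : Fin m => A j = B j).card +
      (Finset.univ.filter fun j : Fin m => ¬ A j = B j).card = m := by
    rw [Finset.card_filter_add_card_filter_not]
    simp
  have hle : (Finset.univ.filter fun j : Fin m => A j ≠ B j).card ≤ m := by
    refine le_trans (Finset.card_filter_le _ _) ?_
    simp
  have hkey : (Finset.univ.filter fun j : Fin m => A j ≠ B j).card =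
      m - (Finset.univ.filter
        fun j : Fin m => conjP m lam j = conjP m mu j + 1).card := by
    simp only [ne_eq]
    omega
  rw [simRel_iff hA hB r, simRel_iff hA hB m]
  constructor
  · rintro ⟨hcond, hc⟩
    refine ⟨⟨hcond, hle⟩, ?_⟩
    omega
  · rintro ⟨⟨hcond, _⟩, hd⟩
    exact ⟨hcond, by omega⟩
end

section
/- Let λ, μ ∈ Λ_N and let r ≥ 0 be an integer. Then μ ∼_r λ if and only if |λ_j − μ_j| ≤ 1 for every 1 ≤ j ≤ N and Σ_{j=1}^{N} |λ_j − μ_j| ≤ r. -/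
open Finset

/-- For partitions `λ, μ ∈ Λ_N` and an integer `r ≥ 0`, `μ ∼_r λ` iff
`|λ_j − μ_j| ≤ 1` for every `j` and `Σ_j |λ_j − μ_j| ≤ r`. -/
theorem statement3 {N : ℕ} (lam mu : Fin N → ℕ) (hlam : IsPartition lam)
    (hmu : IsPartition mu) (r : ℕ) :
    simRel r mu lam ↔
      ((∀ j, |(lam j : ℤ) - (mu j : ℤ)| ≤ 1) ∧
        ∑ j, |(lam j : ℤ) - (mu j : ℤ)| ≤ (r : ℤ)) := by
  constructor
  · rintro ⟨ν, hν, hνl, hνm, hVl, hVm, hsum⟩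
    constructor
    · intro j
      have h1 := hVl j
      have h2 := hVm j
      rw [abs_le]
      omega
    · have key : ∀ j ∈ Finset.univ, |(lam j : ℤ) - (mu j : ℤ)| ≤
          ((lam j - ν j : ℕ) : ℤ) + ((mu j - ν j : ℕ) : ℤ) := by
        intro j _
        have h1 := hVl j
        have h2 := hVm j
        rw [abs_le]
        omega
      calc ∑ j, |(lam j : ℤ) - (mu j : ℤ)|
          ≤ ∑ j, (((lam j - ν j : ℕ) : ℤ) + ((mu j - ν j : ℕ) : ℤ)) :=
            Finset.sum_le_sum key
        _ = ((skewWt lam ν + skewWt mu ν : ℕ) : ℤ) := by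
            rw [skewWt, skewWt]; push_cast; rw [Finset.sum_add_distrib]
        _ ≤ (r : ℤ) := by exact_mod_cast hsum
  · rintro ⟨h1, h2⟩
    refine ⟨fun j => min (lam j) (mu j), ?_, fun j => min_le_left _ _,
      fun j => min_le_right _ _, ?_, ?_, ?_⟩
    · intro i j hij
      exact le_min (le_trans (min_le_left _ _) (hlam i j hij))
        (le_trans (min_le_right _ _) (hmu i j hij))
    · intro j
      have := h1 j
      rw [abs_le] at this
      show min (lam j) (mu j) ≤ lam j ∧ lam j ≤ min (lam j) (mu j) + 1
      constructor <;> omega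
    · intro j
      have := h1 j
      rw [abs_le] at this
      show min (lam j) (mu j) ≤ mu j ∧ mu j ≤ min (lam j) (mu j) + 1
      constructor <;> omega
    · have : ((skewWt lam (fun j => min (lam j) (mu j))
          + skewWt mu (fun j => min (lam j) (mu j)) : ℕ) : ℤ) ≤ (r : ℤ) := by
        rw [skewWt, skewWt]
        push_cast
        rw [Finset.sum_add_distrib.symm]
        refine le_trans (le_of_eq (Finset.sum_congr rfl fun j _ => ?_)) h2
        rcases abs_cases ((lam j : ℤ) - (mu j : ℤ)) with ⟨h, h'⟩ | ⟨h, h'⟩ <;> omega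
      exact_mod_cast this
end

section
/- Let K be a field, let m ≥ 0, and let x_1, …, x_m, z, t, t_0 be nonzero elements of K such that all elements t^{i} t_0 (0 ≤ i ≤ m−1) are nonzero. Then the column-row Cauchy identity holds: ∏_{i=1}^{m} ⟨x_i; z⟩ = Σ_{r=0}^{m} (−1)^{m−r} E_r(x_1,…,x_m; t, t_0) · ⟨z; t_0⟩_{t, m−r}. -/
open Finset

/-- `⟨z;x⟩ := z + z⁻¹ − x − x⁻¹`. -/
def bkt {K : Type*} [Field K] (z x : K) : K := z + z⁻¹ - x - x⁻¹

/-- The one-column hyperoctahedral interpolation polynomial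
`E_r(z_1,…,z_n;t,t_0) := Σ_{1≤j_1<⋯<j_r≤n} ∏_{k=1}^r ⟨z_{j_k}; t^{j_k−k} t_0⟩`
(with `E_0 := 1`); the sum is over `r`-element subsets `S` of indices, listed in
increasing order `j_1 < ⋯ < j_r` via `S.orderIsoOfFin`. -/
def Epoly {K : Type*} [Field K] {n : ℕ} (r : ℕ) (z : Fin n → K) (t t0 : K) : K :=
  ∑ S ∈ Finset.powersetCard r (Finset.univ : Finset (Fin n)),
    ∏ k : Fin S.card,
      bkt (z ((S.orderIsoOfFin rfl k : Fin n)))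
        (t ^ (((S.orderIsoOfFin rfl k : Fin n) : ℕ) - (k : ℕ)) * t0)

/-- `⟨z;t_0⟩_{q,k} := ∏_{i=0}^{k−1} ⟨z; q^i t_0⟩` (with `⟨z;t_0⟩_{q,0} := 1`). -/
def bktPoch {K : Type*} [Field K] (z t0 q : K) (k : ℕ) : K :=
  ∏ i ∈ Finset.range k, bkt z (q ^ i * t0)

-- helper term
noncomputable def ETerm {K : Type*} [Field K] {n : ℕ} (x : Fin n → K) (t t0 : K)
    (S : Finset (Fin n)) : K :=
  ∏ k : Fin S.card,
    bkt (x (S.orderEmbOfFin rfl k)) (t ^ ((S.orderEmbOfFin rfl k : ℕ) - (k : ℕ)) * t0)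

lemma Epoly_eq {K : Type*} [Field K] {n : ℕ} (r : ℕ) (x : Fin n → K) (t t0 : K) :
    Epoly r x t t0 = ∑ S ∈ Finset.powersetCard r (Finset.univ : Finset (Fin n)),
      ETerm x t t0 S := by
  simp [Epoly, ETerm, Finset.coe_orderIsoOfFin_apply]

lemma ETerm_reindex {K : Type*} [Field K] {n : ℕ} (x : Fin n → K) (t t0 : K)
    {S : Finset (Fin n)} {c : ℕ} (h : S.card = c) :
    ETerm x t t0 S = ∏ k : Fin c,
      bkt (x (S.orderEmbOfFin h k)) (t ^ ((S.orderEmbOfFin h k : ℕ) - (k : ℕ)) * t0) := by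
  subst h; rfl

lemma bkt_sub {K : Type*} [Field K] (a b c : K) : bkt a c - bkt b c = bkt a b := by
  simp only [bkt]; ring

lemma Epoly_zero {K : Type*} [Field K] {n : ℕ} (x : Fin n → K) (t t0 : K) :
    Epoly 0 x t t0 = 1 := by
  rw [Epoly_eq]
  simp [ETerm_reindex x t t0 (Finset.card_empty)]

lemma Epoly_of_lt {K : Type*} [Field K] {n r : ℕ} (h : n < r) (x : Fin n → K) (t t0 : K) :
    Epoly r x t t0 = 0 := by
  rw [Epoly_eq, Finset.powersetCard_eq_empty.2 (by simpa using h), Finset.sum_empty]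

lemma orderEmbOfFin_map_castSucc {n : ℕ} (T : Finset (Fin n)) (k : Fin T.card) :
    (T.map Fin.castSuccEmb).orderEmbOfFin (Finset.card_map _) k
      = Fin.castSucc (T.orderEmbOfFin rfl k) := by
  have := Finset.orderEmbOfFin_unique (f := fun k : Fin T.card =>
      Fin.castSucc (T.orderEmbOfFin rfl k)) (Finset.card_map (s := T) Fin.castSuccEmb)
    (fun k => Finset.mem_map_of_mem _ (Finset.orderEmbOfFin_mem T rfl k))
    (Fin.strictMono_castSucc.comp (T.orderEmbOfFin rfl).strictMono)
  exact (congrFun this k).symm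

lemma ETerm_map {K : Type*} [Field K] {n : ℕ} (x : Fin (n + 1) → K) (t t0 : K)
    (T : Finset (Fin n)) :
    ETerm x t t0 (T.map Fin.castSuccEmb) = ETerm (x ∘ Fin.castSucc) t t0 T := by
  rw [ETerm_reindex x t t0 (Finset.card_map _), ETerm_reindex _ t t0 (rfl : T.card = T.card)]
  refine Finset.prod_congr rfl fun k _ => ?_
  rw [orderEmbOfFin_map_castSucc]
  simp

lemma last_not_mem_map {n : ℕ} (T : Finset (Fin n)) :
    Fin.last n ∉ T.map Fin.castSuccEmb := by
  intro h
  obtain ⟨a, -, ha⟩ := Finset.mem_map.1 h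
  exact absurd ha (Fin.castSucc_lt_last a).ne

lemma card_insert_last {n : ℕ} (T : Finset (Fin n)) :
    (insert (Fin.last n) (T.map Fin.castSuccEmb)).card = T.card + 1 := by
  rw [Finset.card_insert_of_notMem (last_not_mem_map T), Finset.card_map]

lemma orderEmbOfFin_insert_last {n : ℕ} (T : Finset (Fin n)) (k : Fin (T.card + 1)) :
    (insert (Fin.last n) (T.map Fin.castSuccEmb)).orderEmbOfFin (card_insert_last T) k
      = Fin.snoc (α := fun _ => Fin (n + 1)) (fun j : Fin T.card => Fin.castSucc (T.orderEmbOfFin rfl j))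
          (Fin.last n) k := by
  have hmono : StrictMono (Fin.snoc (α := fun _ => Fin (n + 1)) (fun j : Fin T.card =>
      Fin.castSucc (T.orderEmbOfFin rfl j)) (Fin.last n)) := by
    intro i j hij
    induction j using Fin.lastCases with
    | last =>
      have hi : i ≠ Fin.last _ := Fin.ne_last_of_lt hij
      obtain ⟨i', rfl⟩ := Fin.exists_castSucc_eq.2 hi
      rw [Fin.snoc_last, Fin.snoc_castSucc]
      exact Fin.castSucc_lt_last _
    | cast j' =>
      have hi : i ≠ Fin.last _ := Fin.ne_last_of_lt hij
      obtain ⟨i', rfl⟩ := Fin.exists_castSucc_eq.2 hi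
      rw [Fin.snoc_castSucc, Fin.snoc_castSucc]
      exact Fin.castSucc_lt_castSucc_iff.2
        ((T.orderEmbOfFin rfl).strictMono (Fin.castSucc_lt_castSucc_iff.1 hij))
  have hmem : ∀ k : Fin (T.card + 1), Fin.snoc (α := fun _ => Fin (n + 1)) (fun j : Fin T.card =>
      Fin.castSucc (T.orderEmbOfFin rfl j)) (Fin.last n) k
        ∈ insert (Fin.last n) (T.map Fin.castSuccEmb) := by
    intro k
    induction k using Fin.lastCases with
    | last => rw [Fin.snoc_last]; exact Finset.mem_insert_self _ _
    | cast k' =>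
      rw [Fin.snoc_castSucc]
      exact Finset.mem_insert_of_mem
        (Finset.mem_map_of_mem _ (Finset.orderEmbOfFin_mem T rfl k'))
  exact (congrFun (Finset.orderEmbOfFin_unique (card_insert_last T) hmem hmono) k).symm

lemma ETerm_insert_last {K : Type*} [Field K] {n : ℕ} (x : Fin (n + 1) → K) (t t0 : K)
    {r : ℕ} (T : Finset (Fin n)) (hT : T.card = r) :
    ETerm x t t0 (insert (Fin.last n) (T.map Fin.castSuccEmb))
      = bkt (x (Fin.last n)) (t ^ (n - r) * t0) * ETerm (x ∘ Fin.castSucc) t t0 T := by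
  subst hT
  rw [ETerm_reindex x t t0 (card_insert_last T), ETerm_reindex _ t t0 (rfl : T.card = T.card)]
  rw [Fin.prod_univ_castSucc]
  simp only [orderEmbOfFin_insert_last, Fin.snoc_castSucc, Fin.snoc_last]
  rw [mul_comm]
  simp [Function.comp]

lemma map_preimage_castSucc {n : ℕ} (S : Finset (Fin (n + 1))) (hS : Fin.last n ∉ S) :
    (S.preimage Fin.castSucc ((Fin.castSucc_injective n).injOn)).map Fin.castSuccEmb = S := by
  ext a
  simp only [Finset.mem_map, Finset.mem_preimage, Fin.coe_castSuccEmb]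
  constructor
  · rintro ⟨b, hb, rfl⟩; exact hb
  · intro ha
    have : a ≠ Fin.last n := fun h => hS (h ▸ ha)
    obtain ⟨b, rfl⟩ := Fin.exists_castSucc_eq.2 this
    exact ⟨b, ha, rfl⟩

lemma preimage_map_castSucc {n : ℕ} (T : Finset (Fin n)) :
    (T.map Fin.castSuccEmb).preimage Fin.castSucc ((Fin.castSucc_injective n).injOn) = T := by
  ext a
  simp only [Finset.mem_preimage, Finset.mem_map, Fin.coe_castSuccEmb]
  constructor
  · rintro ⟨b, hb, h⟩
    rwa [← Fin.castSucc_injective n (show Fin.castSucc b = Fin.castSucc a from h)]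
  · intro ha; exact ⟨a, ha, rfl⟩

lemma Epoly_succ {K : Type*} [Field K] {n : ℕ} (r : ℕ) (x : Fin (n + 1) → K) (t t0 : K) :
    Epoly (r + 1) x t t0 = Epoly (r + 1) (x ∘ Fin.castSucc) t t0
      + bkt (x (Fin.last n)) (t ^ (n - r) * t0) * Epoly r (x ∘ Fin.castSucc) t t0 := by
  rw [Epoly_eq, Epoly_eq, Epoly_eq]
  rw [← Finset.sum_filter_add_sum_filter_not
    (Finset.powersetCard (r + 1) (Finset.univ : Finset (Fin (n + 1))))
    (fun S => Fin.last n ∉ S)]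
  congr 1
  · -- last ∉ S part
    refine (Finset.sum_bij' (fun S _ => S.preimage Fin.castSucc ((Fin.castSucc_injective n).injOn))
      (fun T _ => T.map Fin.castSuccEmb) ?_ ?_ ?_ ?_ ?_)
    · intro S hS
      obtain ⟨hS1, hS2⟩ := Finset.mem_filter.1 hS
      rw [Finset.mem_powersetCard_univ]
      have := congrArg Finset.card (map_preimage_castSucc S hS2)
      rw [Finset.card_map] at this
      rw [this, (Finset.mem_powersetCard_univ).1 hS1]
    · intro T hT
      refine Finset.mem_filter.2 ⟨?_, last_not_mem_map T⟩
      rw [Finset.mem_powersetCard_univ, Finset.card_map]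
      exact Finset.mem_powersetCard_univ.1 hT
    · intro S hS
      exact map_preimage_castSucc S (Finset.mem_filter.1 hS).2
    · intro T _
      exact preimage_map_castSucc T
    · intro S hS
      obtain ⟨_, hS2⟩ := Finset.mem_filter.1 hS
      conv_lhs => rw [← map_preimage_castSucc S hS2]
      rw [ETerm_map]
  · -- last ∈ S part
    rw [Finset.mul_sum]
    refine (Finset.sum_bij' (fun S _ => (S.erase (Fin.last n)).preimage Fin.castSucc
        ((Fin.castSucc_injective n).injOn))
      (fun T _ => insert (Fin.last n) (T.map Fin.castSuccEmb)) ?_ ?_ ?_ ?_ ?_)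
    · intro S hS
      obtain ⟨hS1, hS2⟩ := Finset.mem_filter.1 hS
      rw [not_not] at hS2
      rw [Finset.mem_powersetCard_univ]
      have h1 := congrArg Finset.card
        (map_preimage_castSucc (S.erase (Fin.last n)) (Finset.notMem_erase _ _))
      rw [Finset.card_map] at h1
      rw [h1, Finset.card_erase_of_mem hS2, Finset.mem_powersetCard_univ.1 hS1]
      omega
    · intro T hT
      refine Finset.mem_filter.2 ⟨?_, ?_⟩
      · rw [Finset.mem_powersetCard_univ, card_insert_last,
          Finset.mem_powersetCard_univ.1 hT]
      · rw [not_not]; exact Finset.mem_insert_self _ _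
    · intro S hS
      obtain ⟨_, hS2⟩ := Finset.mem_filter.1 hS
      rw [not_not] at hS2
      rw [map_preimage_castSucc (S.erase (Fin.last n)) (Finset.notMem_erase _ _),
        Finset.insert_erase hS2]
    · intro T _
      rw [Finset.erase_insert (last_not_mem_map T), preimage_map_castSucc T]
    · intro S hS
      obtain ⟨hS1, hS2⟩ := Finset.mem_filter.1 hS
      rw [not_not] at hS2
      have hback : insert (Fin.last n)
          (((S.erase (Fin.last n)).preimage Fin.castSucc
            ((Fin.castSucc_injective n).injOn)).map Fin.castSuccEmb) = S := by
        rw [map_preimage_castSucc (S.erase (Fin.last n)) (Finset.notMem_erase _ _),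
          Finset.insert_erase hS2]
      have hcard : ((S.erase (Fin.last n)).preimage Fin.castSucc
          ((Fin.castSucc_injective n).injOn)).card = r := by
        have h1 := congrArg Finset.card
          (map_preimage_castSucc (S.erase (Fin.last n)) (Finset.notMem_erase _ _))
        rw [Finset.card_map] at h1
        rw [h1, Finset.card_erase_of_mem hS2, Finset.mem_powersetCard_univ.1 hS1]
        omega
      conv_lhs => rw [← hback]
      rw [ETerm_insert_last x t t0 _ hcard]

lemma bktPoch_succ {K : Type*} [Field K] (z t0 q : K) (k : ℕ) :
    bktPoch z t0 q (k + 1) = bktPoch z t0 q k * bkt z (q ^ k * t0) :=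
  Finset.prod_range_succ _ k

lemma main_aux {K : Type*} [Field K] (z t t0 : K) :
    ∀ (m : ℕ) (x : Fin m → K),
      ∏ i, bkt (x i) z =
        ∑ r ∈ Finset.range (m + 1),
          (-1 : K) ^ (m - r) * Epoly r x t t0 * bktPoch z t0 t (m - r) := by
  intro m
  induction m with
  | zero =>
    intro x
    simp [Epoly_zero, bktPoch]
  | succ m ih =>
    intro x
    set E' : ℕ → K := fun r => Epoly r (x ∘ Fin.castSucc) t t0 with hE'
    set P : ℕ → K := fun k => bktPoch z t0 t k with hP
    set g : ℕ → K := fun r => (-1 : K) ^ (m + 1 - r) * E' r * P (m + 1 - r) with hg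
    have hD : ∑ r ∈ Finset.range (m + 1), g r
        = (∑ i ∈ Finset.range (m + 1), (-1 : K) ^ (m - i) * E' (i + 1) * P (m - i))
          + (-1 : K) ^ (m + 1) * P (m + 1) := by
      have h1 := Finset.sum_range_succ g (m + 1)
      have h2 := Finset.sum_range_succ' g (m + 1)
      have hg0 : g 0 = (-1 : K) ^ (m + 1) * P (m + 1) := by
        simp [hg, hE', Epoly_zero]
      have hgtop : g (m + 1) = 0 := by
        simp [hg, hE', Epoly_of_lt (Nat.lt_succ_self m)]
      have hgs : ∀ i, g (i + 1) = (-1 : K) ^ (m - i) * E' (i + 1) * P (m - i) := by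
        intro i; simp [hg, Nat.succ_sub_succ]
      rw [hgtop, add_zero] at h1
      rw [hg0] at h2
      rw [← h1, h2]
      refine congrArg (· + _) (Finset.sum_congr rfl fun i _ => hgs i)
    rw [Fin.prod_univ_castSucc]
    have ih' := ih (x ∘ Fin.castSucc)
    simp only [Function.comp_apply] at ih'
    rw [ih']
    rw [Finset.sum_range_succ'
      (fun r => (-1 : K) ^ (m + 1 - r) * Epoly r x t t0 * bktPoch z t0 t (m + 1 - r)) (m + 1)]
    simp only [Nat.succ_sub_succ, Nat.sub_zero, Epoly_zero, Epoly_succ, mul_one]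
    rw [Finset.sum_mul]
    have key : ∀ i ∈ Finset.range (m + 1),
        (-1 : K) ^ (m - i) * E' i * P (m - i) * bkt (x (Fin.last m)) z
          = ((-1 : K) ^ (m - i) * (bkt (x (Fin.last m)) (t ^ (m - i) * t0) * E' i) * P (m - i))
            + g i := by
      intro i hi
      have hmi : m + 1 - i = (m - i) + 1 := by
        have := Finset.mem_range.1 hi; omega
      simp only [hg, hmi, hP, bktPoch_succ]
      have hb := bkt_sub (x (Fin.last m)) z (t ^ (m - i) * t0)
      linear_combination ((-1 : K) ^ (m - i) * E' i * P (m - i)) * hb.symm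
    rw [Finset.sum_congr rfl key, Finset.sum_add_distrib, hD]
    simp only [mul_add, add_mul]
    rw [Finset.sum_add_distrib]
    ring

/-- column-row Cauchy identity:
`∏_{i=1}^m ⟨x_i; z⟩ = Σ_{r=0}^m (−1)^{m−r} E_r(x_1,…,x_m;t,t_0) ⟨z;t_0⟩_{t,m−r}`. -/
theorem statement14 {K : Type*} [Field K] (m : ℕ) (x : Fin m → K) (z t t0 : K)
    (hx : ∀ i, x i ≠ 0) (hz : z ≠ 0) (ht : t ≠ 0) (ht0 : t0 ≠ 0)
    (htt0 : ∀ i < m, t ^ i * t0 ≠ 0) :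
    ∏ i, bkt (x i) z =
      ∑ r ∈ Finset.range (m + 1),
        (-1 : K) ^ (m - r) * Epoly r x t t0 * bktPoch z t0 t (m - r) :=
  main_aux z t t0 m x
end

section
/- Let K be a field, let t, t_0 ∈ K be nonzero with t^i t_0 nonzero for all i ≥ 0, and let m ≥ 1, n ≥ 0. Suppose given: (a) functions A_λ : (K^×)^m → K for each λ ∈ Λ_m with λ ⊂ (n+1)^m; (b) for each N ∈ {n, n+1}, functions B^{(N)}_μ : (K^×)^N → K for each μ ∈ Λ_N with μ ⊂ m^N; (c) scalars c(μ, λ, r) ∈ K for μ ⊂ n^m, λ ⊂ (n+1)^m in Λ_m and integers 0 ≤ r ≤ m with λ ∼_r μ. Assume the following hypotheses for all nonzero arguments: (H1) [Cauchy formula] for N ∈ {n, n+1}: ∏_{1≤i≤m, 1≤j≤N} ⟨x_i; z_j⟩ = Σ_{λ ∈ Λ_m, λ ⊂ N^m} (−1)^{mN − |λ|} A_λ(x_1,…,x_m) B^{(N)}_{m^N − λ′}(z_1,…,z_N); (H2) [column-row Cauchy formula] ∏_{i=1}^{m} ⟨x_i; z⟩ = Σ_{r=0}^{m} (−1)^{m−r}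 E_r(x_1,…,x_m; t, t_0) ⟨z; t_0⟩_{t, m−r}; (H3) [Pieri formula] for every μ ∈ Λ_m with μ ⊂ n^m and 0 ≤ r ≤ m: E_r(x_1,…,x_m; t, t_0) A_μ(x_1,…,x_m) = Σ_{λ ⊂ (n+1)^m, λ ∼_r μ} c(μ, λ, r) A_λ(x_1,…,x_m); (H4) the functions A_λ, λ ⊂ (n+1)^m, are linearly independent over K as functions on (K^×)^m. Then for every λ ∈ Λ_m with λ ⊂ (n+1)^m and all nonzero z_1,…,z_n, z ∈ K: B^{(n+1)}_{m^{n+1} − λ′}(z_1,…,z_n,z) = Σ_{μ ⊂ n^m} Σ_{0 ≤ r ≤ m with μ ∼_r λ} (−1)^{r + |λ| − |μ|} c(μ, λ, r) B^{(n)}_{m^n − μ′}(z_1,…,z_n) ⟨z; t_0⟩_{t, m−r}. -/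
open Finset

instance {N : ℕ} : DecidablePred (IsPartition (N := N)) := fun l => by
  unfold IsPartition; infer_instance

/-- The (finite) set of partitions in `Λ_m` contained in the rectangle `N^m`,
i.e. partitions with at most `m` parts, all of size at most `N`. -/
def partitionsIn (m N : ℕ) : Finset (Fin m → ℕ) :=
  ((Finset.univ : Finset (Fin m → Fin (N + 1))).image
    (fun f j => ((f j : ℕ)))).filter IsPartition


lemma mem_partitionsIn_le {m N : ℕ} {l : Fin m → ℕ} (h : l ∈ partitionsIn m N) :
    ∀ j, l j ≤ N := by
  intro j
  rw [partitionsIn, Finset.mem_filter, Finset.mem_image] at h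
  obtain ⟨⟨f, _, hf⟩, _⟩ := h
  rw [← hf]
  exact Nat.lt_succ_iff.mp (f j).isLt

lemma wt_le_of_mem {m N : ℕ} {l : Fin m → ℕ} (h : l ∈ partitionsIn m N) :
    wt l ≤ m * N := by
  calc wt l ≤ ∑ _j : Fin m, N := Finset.sum_le_sum (fun j _ => mem_partitionsIn_le h j)
  _ = m * N := by simp [mul_comm]

lemma neg_one_zpow_eq' {K : Type*} [Field K] {a : ℤ} {b : ℕ}
    (h : (2:ℤ) ∣ a - b) : (-1:K) ^ a = (-1:K) ^ b := by
  obtain ⟨k, hk⟩ := h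
  rcases Int.even_or_odd a with he | ho
  · have hb : Even b := by
      rw [← Int.even_coe_nat]; rw [Int.even_iff] at he ⊢; omega
    rw [he.neg_one_zpow, hb.neg_one_pow]
  · have hb : Odd b := by
      rw [← Int.odd_coe_nat]; rw [Int.odd_iff] at ho ⊢; omega
    rw [ho.neg_one_zpow, hb.neg_one_pow]

open scoped Classical in
/-- abstract derivation of the branching rule. Given families
`A_λ` (`λ ∈ Λ_m`, `λ ⊂ (n+1)^m`), `B^{(n)}_μ`, `B^{(n+1)}_μ` and Pieri coefficients
`c(μ,λ,r)` satisfying: (H1) the Cauchy formulas in `N = n` and `N = n+1` variables,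
(H2) the column-row Cauchy formula, (H3) the Pieri formula, and (H4) linear
independence of the `A_λ` as functions on `(K^×)^m`, it follows that for every
`λ ⊂ (n+1)^m` and nonzero `z_1,…,z_n,z`:
`B^{(n+1)}_{m^{n+1}−λ′}(z_1,…,z_n,z) = Σ_{μ ⊂ n^m} Σ_{0 ≤ r ≤ m, μ ∼_r λ}
(−1)^{r+|λ|−|μ|} c(μ,λ,r) B^{(n)}_{m^n−μ′}(z_1,…,z_n) ⟨z;t_0⟩_{t,m−r}`. -/
theorem statement16 {K : Type*} [Field K] (t t0 : K) (ht : t ≠ 0) (ht0 : t0 ≠ 0)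
    (htt0 : ∀ i : ℕ, t ^ i * t0 ≠ 0) (m n : ℕ) (hm : 1 ≤ m)
    (A : (Fin m → ℕ) → (Fin m → K) → K)
    (Bn : (Fin n → ℕ) → (Fin n → K) → K)
    (Bn1 : (Fin (n + 1) → ℕ) → (Fin (n + 1) → K) → K)
    (c : (Fin m → ℕ) → (Fin m → ℕ) → ℕ → K)
    -- (H1) Cauchy formula in `N = n` variables
    (hCauchyN : ∀ (x : Fin m → K), (∀ i, x i ≠ 0) →
      ∀ (z : Fin n → K), (∀ j, z j ≠ 0) →
        (∏ i, ∏ j, bkt (x i) (z j)) =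
          ∑ l ∈ partitionsIn m n,
            (-1 : K) ^ (m * n - wt l) * A l x * Bn (complP m (conjP n l)) z)
    -- (H1) Cauchy formula in `N = n+1` variables
    (hCauchyN1 : ∀ (x : Fin m → K), (∀ i, x i ≠ 0) →
      ∀ (z : Fin (n + 1) → K), (∀ j, z j ≠ 0) →
        (∏ i, ∏ j, bkt (x i) (z j)) =
          ∑ l ∈ partitionsIn m (n + 1),
            (-1 : K) ^ (m * (n + 1) - wt l) * A l x * Bn1 (complP m (conjP (n + 1) l)) z)
    -- (H2) column-row Cauchy formula
    (hColRow : ∀ (x : Fin m → K), (∀ i, x i ≠ 0) → ∀ z : K, z ≠ 0 →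
      (∏ i, bkt (x i) z) =
        ∑ r ∈ Finset.range (m + 1),
          (-1 : K) ^ (m - r) * Epoly r x t t0 * bktPoch z t0 t (m - r))
    -- (H3) Pieri formula
    (hPieri : ∀ μ ∈ partitionsIn m n, ∀ r ≤ m, ∀ (x : Fin m → K), (∀ i, x i ≠ 0) →
      Epoly r x t t0 * A μ x =
        ∑ l ∈ (partitionsIn m (n + 1)).filter (fun l => simRel r μ l),
          c μ l r * A l x)
    -- (H4) linear independence of the `A_λ` as functions on `(K^×)^m`
    (hLI : LinearIndependent K
      (fun (l : partitionsIn m (n + 1)) (x : Fin m → Kˣ) =>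
        A (l : Fin m → ℕ) (fun i => (x i : K)))) :
    ∀ l ∈ partitionsIn m (n + 1), ∀ (z : Fin n → K), (∀ j, z j ≠ 0) →
      ∀ zz : K, zz ≠ 0 →
        Bn1 (complP m (conjP (n + 1) l)) (Fin.snoc z zz) =
          ∑ μ ∈ partitionsIn m n,
            ∑ r ∈ (Finset.range (m + 1)).filter (fun r => simRel r μ l),
              (-1 : K) ^ ((r : ℤ) + (wt l : ℤ) - (wt μ : ℤ)) * c μ l r *
                Bn (complP m (conjP n μ)) z * bktPoch zz t0 t (m - r) := by
  classical
  intro l hl z hz zz hzz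
  set P := partitionsIn m (n+1) with hPdef
  set Q := partitionsIn m n with hQdef
  set F : (Fin m → ℕ) → K := fun l0 =>
    (-1:K) ^ (m*(n+1) - wt l0) * Bn1 (complP m (conjP (n+1) l0)) (Fin.snoc z zz) with hFdef
  set G : (Fin m → ℕ) → K := fun l0 =>
    ∑ μ ∈ Q, ∑ r ∈ (Finset.range (m+1)).filter (fun r => simRel r μ l0),
      ((-1:K) ^ (m*n - wt μ) * Bn (complP m (conjP n μ)) z) *
        ((-1:K) ^ (m-r) * bktPoch zz t0 t (m-r)) * c μ l0 r with hGdef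
  have hsnoc : ∀ j, (Fin.snoc z zz : Fin (n+1) → K) j ≠ 0 := by
    intro j
    induction j using Fin.lastCases with
    | last => simpa using hzz
    | cast j => simpa using hz j
  have key : ∀ x : Fin m → K, (∀ i, x i ≠ 0) →
      ∑ l' ∈ P, F l' * A l' x = ∑ l' ∈ P, G l' * A l' x := by
    intro x hx
    have e1 : ∑ l' ∈ P, F l' * A l' x = ∏ i, ∏ j : Fin (n+1), bkt (x i) ((Fin.snoc z zz : Fin (n+1) → K) j) := by
      rw [hCauchyN1 x hx _ hsnoc]
      exact Finset.sum_congr rfl fun l' _ => by simp only [hFdef]; ring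
    have e2 : (∏ i, ∏ j : Fin (n+1), bkt (x i) ((Fin.snoc z zz : Fin (n+1) → K) j)) =
        (∏ i, ∏ j : Fin n, bkt (x i) (z j)) * ∏ i, bkt (x i) zz := by
      rw [← Finset.prod_mul_distrib]
      refine Finset.prod_congr rfl fun i _ => ?_
      rw [Fin.prod_univ_castSucc]
      simp
    rw [e1, e2, hCauchyN x hx z hz, hColRow x hx zz hzz, Finset.sum_mul_sum]
    have e3 : ∀ μ ∈ Q, ∀ r ∈ Finset.range (m+1),
        ((-1:K) ^ (m*n - wt μ) * A μ x * Bn (complP m (conjP n μ)) z) *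
          ((-1:K) ^ (m-r) * Epoly r x t t0 * bktPoch zz t0 t (m-r)) =
        ∑ l' ∈ P, (if simRel r μ l' then
          ((-1:K) ^ (m*n - wt μ) * Bn (complP m (conjP n μ)) z) *
            ((-1:K) ^ (m-r) * bktPoch zz t0 t (m-r)) * c μ l' r * A l' x else 0) := by
      intro μ hμ r hr
      have hp := hPieri μ hμ r (Nat.lt_succ_iff.mp (Finset.mem_range.mp hr)) x hx
      rw [← Finset.sum_filter]
      calc ((-1:K) ^ (m*n - wt μ) * A μ x * Bn (complP m (conjP n μ)) z) *
          ((-1:K) ^ (m-r) * Epoly r x t t0 * bktPoch zz t0 t (m-r))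
          = ((-1:K) ^ (m*n - wt μ) * Bn (complP m (conjP n μ)) z) *
            ((-1:K) ^ (m-r) * bktPoch zz t0 t (m-r)) * (Epoly r x t t0 * A μ x) := by ring
        _ = _ := by
            rw [hp, Finset.mul_sum]
            exact Finset.sum_congr rfl fun l' _ => by ring
    rw [Finset.sum_congr rfl (fun μ hμ => Finset.sum_congr rfl (fun r hr => e3 μ hμ r hr))]
    rw [Finset.sum_congr rfl (fun μ _ => Finset.sum_comm (s := Finset.range (m+1)) (t := P)),
      Finset.sum_comm]
    refine Finset.sum_congr rfl fun l' _ => ?_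
    rw [hGdef]
    simp only []
    rw [Finset.sum_mul]
    refine Finset.sum_congr rfl fun μ _ => ?_
    rw [Finset.sum_mul, Finset.sum_filter]
  rw [Fintype.linearIndependent_iff] at hLI
  have hg : ∀ i : {l' // l' ∈ P}, F (i : Fin m → ℕ) - G (i : Fin m → ℕ) = 0 := by
    apply hLI (fun i => F (i : Fin m → ℕ) - G (i : Fin m → ℕ))
    funext x
    have hx : ∀ i, (x i : K) ≠ 0 := fun i => (x i).ne_zero
    have hk := key (fun i => (x i : K)) hx
    simp only [Finset.sum_apply, Pi.smul_apply, smul_eq_mul, Pi.zero_apply]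
    rw [Finset.sum_coe_sort P
      (fun l' => (F l' - G l') * A l' fun i => ((x i : K)))]
    simp only [sub_mul]
    rw [Finset.sum_sub_distrib, hk, sub_self]
  have hFG : F l = G l := sub_eq_zero.mp (hg ⟨l, hl⟩)
  have h2 : (-1:K)^(m*(n+1) - wt l) * (-1:K)^(m*(n+1) - wt l) = 1 := by
    rw [← pow_add]
    exact Even.neg_one_pow ⟨_, rfl⟩
  have hBG : Bn1 (complP m (conjP (n+1) l)) (Fin.snoc z zz) =
      (-1:K)^(m*(n+1) - wt l) * G l := by
    rw [← hFG, hFdef]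
    simp only []
    rw [← mul_assoc, h2, one_mul]
  rw [hBG, hGdef]
  simp only []
  rw [Finset.mul_sum]
  refine Finset.sum_congr rfl fun μ hμ => ?_
  rw [Finset.mul_sum]
  refine Finset.sum_congr rfl fun r hr => ?_
  obtain ⟨hr1, hr2⟩ := Finset.mem_filter.mp hr
  have hrm : r ≤ m := Nat.lt_succ_iff.mp (Finset.mem_range.mp hr1)
  have hwl : wt l ≤ m*(n+1) := wt_le_of_mem hl
  have hwμ : wt μ ≤ m*n := wt_le_of_mem hμ
  have hsign : (-1:K) ^ ((r:ℤ) + (wt l : ℤ) - (wt μ : ℤ)) =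
      (-1:K) ^ ((m*(n+1) - wt l) + ((m*n - wt μ) + (m - r))) := by
    have hmn : m * (n+1) = m*n + m := by ring
    rw [hmn] at hwl ⊢
    generalize hq : m*n = q at hwl hwμ ⊢
    apply neg_one_zpow_eq'
    omega
  rw [hsign, pow_add, pow_add]
  ring
end
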